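/- Let A be a commutative ring, λ ∈ A a non-nilpotent element, and T = [Nᵗ, Dᵗ]ᵗ an (m+n)×m matrix over A with det D a nonzerodivisor of A. Suppose there exist a positive integer r, a matrix K over A, and an m-element subset I of {1,…,m+n} with λʳ T = K Δ_I T. Then over the localization A_λ: (i) the m×m matrix Δ_I T is nonsingular over A_λ (its determinant is a nonzerodivisor of A_λ); and (ii) there exists a matrix X over A_λ such that the (m+n)×(m+n) matrix [λ⁻ʳK, X] is invertible over A_λ and T = [λ⁻ʳK, X] · [(Δ_I T)ᵗ, O]ᵗ. -/

import Mathlib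

open Matrix

/-- The selection matrix `Δ_I`. -/
noncomputable def deltaMat {A : Type*} [CommRing A] (m N : ℕ) (I : Finset (Fin N))
    (h : I.card = m) : Matrix (Fin m) (Fin N) A :=
  Matrix.of fun k j => if j = (I.orderIsoOfFin h k : Fin N) then 1 else 0

/-- The stacked matrix `T = [Nᵗ, Dᵗ]ᵗ`. -/
def stackND {A : Type*} [CommRing A] {n m : ℕ} (N : Matrix (Fin n) (Fin m) A)
    (D : Matrix (Fin m) (Fin m) A) : Matrix (Fin (n + m)) (Fin m) A :=
  Matrix.of (Fin.addCases (motive := fun _ => Fin m → A) (fun i => N i) (fun j => D j))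

section aux

variable {A : Type*} [CommRing A]

lemma right_mem_nonZeroDivisors {a b : A} (h : a * b ∈ nonZeroDivisors A) :
    b ∈ nonZeroDivisors A := mem_nonZeroDivisors_iff_right.mpr fun z hz =>
  mem_nonZeroDivisors_iff_right.mp h z (by rw [show z * (a * b) = a * (z * b) by ring, hz, mul_zero])

lemma matrix_mul_cancel {k m : Type*} [Fintype m] [DecidableEq m]
    {P Q : Matrix k m A} {M : Matrix m m A} (hM : M.det ∈ nonZeroDivisors A)
    (h : P * M = Q * M) : P = Q := by
  have h0 : (P - Q) * M = 0 := by rw [Matrix.sub_mul, h, sub_self]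
  have h1 : M.det • (P - Q) = 0 := by
    have h2 := congrArg (· * M.adjugate) h0
    simpa [Matrix.mul_assoc, Matrix.mul_adjugate, Matrix.mul_smul] using h2
  have h3 : P - Q = 0 := by
    ext i j
    have h4 := congrFun (congrFun h1 i) j
    simp only [Matrix.smul_apply, smul_eq_mul, Matrix.zero_apply] at h4 ⊢
    exact mem_nonZeroDivisors_iff_right.mp hM _ (by rw [mul_comm]; exact h4)
  exact sub_eq_zero.mp h3

lemma map_nzd_loc (lam : A) {a : A} (ha : a ∈ nonZeroDivisors A) :
    algebraMap A (Localization.Away lam) a ∈ nonZeroDivisors (Localization.Away lam) := by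
  rw [mem_nonZeroDivisors_iff_right]
  intro z hz
  obtain ⟨⟨x, s⟩, hx⟩ := IsLocalization.surj (Submonoid.powers lam) z
  have h1 : algebraMap A (Localization.Away lam) (x * a) = 0 := by
    rw [_root_.map_mul, ← hx,
      show z * algebraMap A (Localization.Away lam) s.1 * algebraMap A (Localization.Away lam) a
        = z * algebraMap A (Localization.Away lam) a * algebraMap A (Localization.Away lam) s.1 by
        ring, hz, zero_mul]
  rw [IsLocalization.map_eq_zero_iff (Submonoid.powers lam)] at h1
  obtain ⟨c, hc⟩ := h1
  have hx0 : algebraMap A (Localization.Away lam) x = 0 := by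
    rw [IsLocalization.map_eq_zero_iff (Submonoid.powers lam)]
    exact ⟨c, mem_nonZeroDivisors_iff_right.mp ha _ (by rw [show (c : A) * x * a = c * (x * a) by ring, hc])⟩
  have hu := IsLocalization.map_units (Localization.Away lam) s
  have : z * algebraMap A (Localization.Away lam) s.1 = 0 := by rw [hx, hx0]
  exact hu.mul_right_cancel (by rwa [zero_mul])

lemma deltaMat_mul_apply {m N' p : ℕ} (I : Finset (Fin N')) (hI : I.card = m)
    (P : Matrix (Fin N') (Fin p) A) (a : Fin m) (b : Fin p) :
    ((deltaMat m N' I hI : Matrix (Fin m) (Fin N') A) * P) a b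
      = P (I.orderIsoOfFin hI a : Fin N') b := by
  simp only [deltaMat, Matrix.mul_apply, Matrix.of_apply, ite_mul, one_mul, zero_mul,
    Finset.sum_ite_eq', Finset.mem_univ, if_true]

lemma deltaMat_map {B : Type*} [CommRing B] (f : A →+* B) {m N' : ℕ}
    (I : Finset (Fin N')) (hI : I.card = m) :
    (deltaMat m N' I hI : Matrix (Fin m) (Fin N') A).map f = deltaMat m N' I hI := by
  ext i j
  simp only [deltaMat, Matrix.map_apply, Matrix.of_apply]
  split_ifs <;> simp

lemma submatrix_mul_id {k l m' p : Type*} [Fintype m'] (M : Matrix l m' A)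
    (P : Matrix m' p A) (f : k → l) :
    (M * P).submatrix f id = M.submatrix f id * P := by
  ext i j
  simp [Matrix.mul_apply]

end aux

/-- from a relation `λʳ T = K Δ_I T` (λ not nilpotent, det D a
nonzerodivisor), over `A_λ` the matrix `Δ_I T` is nonsingular and `T` factors as
`[λ⁻ʳK, X] · [(Δ_I T)ᵗ, O]ᵗ` with `[λ⁻ʳK, X]` invertible. -/
theorem stmt_11 {A : Type*} [CommRing A] {n m : ℕ}
    (lam : A) (hnil : ¬ IsNilpotent lam)
    (N : Matrix (Fin n) (Fin m) A) (D : Matrix (Fin m) (Fin m) A)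
    (hD : D.det ∈ nonZeroDivisors A)
    (r : ℕ) (hr : 0 < r) (K : Matrix (Fin (n + m)) (Fin m) A)
    (I : Finset (Fin (n + m))) (hI : I.card = m)
    (heq : lam ^ r • stackND N D = K * (deltaMat m (n + m) I hI * stackND N D : Matrix (Fin m) (Fin m) A)) :
    (((deltaMat m (n + m) I hI * stackND N D).map
        (algebraMap A (Localization.Away lam))).det ∈
      nonZeroDivisors (Localization.Away lam)) ∧
    (∃ X : Matrix (Fin (n + m)) (Fin n) (Localization.Away lam),
      letI K' : Matrix (Fin (n + m)) (Fin m) (Localization.Away lam) :=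
        (IsLocalization.Away.invSelf (S := Localization.Away lam) lam) ^ r •
          K.map (algebraMap A (Localization.Away lam))
      IsUnit ((Matrix.fromCols K' X).submatrix
          (fun i : Fin (n + m) => i)
          (fun j : Fin (n + m) =>
            finSumFinEquiv.symm (finCongr (Nat.add_comm n m) j))).det ∧
      (stackND N D).map (algebraMap A (Localization.Away lam)) =
        Matrix.fromCols K' X *
          Matrix.fromRows
            ((deltaMat m (n + m) I hI * stackND N D).map
              (algebraMap A (Localization.Away lam)))
            (0 : Matrix (Fin n) (Fin m) (Localization.Away lam))) := by
  have hcs : ∀ (P : Matrix (Fin m) (Fin (n + m)) A) (Q : Matrix (Fin (n + m)) (Fin m) A),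
      @HMul.hMul (Matrix (Fin m) (Fin (n + m)) A) (Matrix (Fin (n + m)) (Fin m) A)
        (CStarMatrix (Fin m) (Fin m) A) CStarMatrix.instHMulOfFintypeOfMulOfAddCommMonoid P Q
        = (P * Q : Matrix (Fin m) (Fin m) A) := fun _ _ => rfl
  simp only [hcs] at heq ⊢
  set S := Localization.Away lam with hS
  set φ := algebraMap A S with hφ
  set u := IsLocalization.Away.invSelf (S := S) lam with hu
  have huv : φ lam * u = 1 := IsLocalization.Away.mul_invSelf lam
  set T := stackND N D with hT
  set Δ : Matrix (Fin m) (Fin (n + m)) A := deltaMat m (n + m) I hI with hΔ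
  set M : Matrix (Fin m) (Fin m) S := (Δ * T).map φ with hM
  set K' : Matrix (Fin (n + m)) (Fin m) S := u ^ r • K.map φ with hK'
  -- key factorization over S
  have hT' : T.map φ = K' * M := by
    have h1 : (lam ^ r • T).map φ = (K * (Δ * T)).map φ := congrArg (fun Z => Z.map φ) heq
    have h2 : φ lam ^ r • T.map φ = K.map φ * M := by
      have hsm : (lam ^ r • T).map φ = φ lam ^ r • T.map φ := by
        ext i j
        simp [Matrix.map_apply, Matrix.smul_apply, _root_.map_mul, map_pow]
      rw [← hsm, h1, Matrix.map_mul, hM]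
    calc T.map φ = (u ^ r * φ lam ^ r) • T.map φ := by
          rw [← mul_pow, mul_comm u, huv, one_pow, one_smul]
      _ = u ^ r • (φ lam ^ r • T.map φ) := by rw [mul_smul]
      _ = u ^ r • (K.map φ * M) := by rw [h2]
      _ = K' * M := by rw [hK', Matrix.smul_mul]
  -- det M is a nonzerodivisor
  have hdetM : M.det ∈ nonZeroDivisors S := by
    have hDbot : (T.map φ).submatrix (Fin.natAdd n) id = D.map φ := by
      ext i j
      simp [hT, stackND, Matrix.map_apply]
    have h3 : D.map φ = K'.submatrix (Fin.natAdd n) id * M := by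
      rw [← hDbot, hT', submatrix_mul_id]
    have h4 : (D.map φ).det = (K'.submatrix (Fin.natAdd n) id).det * M.det := by
      rw [h3, Matrix.det_mul]
    have h5 : (D.map φ).det ∈ nonZeroDivisors S := by
      have : (D.map φ).det = φ D.det := by
        rw [RingHom.map_det φ D, RingHom.mapMatrix_apply]
      rw [this]
      exact map_nzd_loc lam hD
    rw [h4] at h5
    exact right_mem_nonZeroDivisors h5
  -- Δ' * K' = 1
  have hΔmap : Δ.map φ = deltaMat m (n + m) I hI := deltaMat_map φ I hI
  have hΔK : Δ.map φ * K' = 1 := by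
    apply matrix_mul_cancel hdetM
    rw [Matrix.mul_assoc, ← hT', Matrix.one_mul, hM, Matrix.map_mul]
  have hΔK' : ∀ (a : Fin m) (b : Fin m), K' ((I.orderIsoOfFin hI a : Fin (n + m))) b
      = (1 : Matrix (Fin m) (Fin m) S) a b := by
    intro a b
    rw [← hΔK, hΔmap, deltaMat_mul_apply]
  refine ⟨hdetM, ?_⟩
  -- complement data
  have hc : Iᶜ.card = n := by
    have := Finset.card_compl I
    simp only [hI, Fintype.card_fin] at this
    omega
  set X : Matrix (Fin (n + m)) (Fin n) S :=
    Matrix.of (fun i j => if i = (Iᶜ.orderIsoOfFin hc j : Fin (n + m)) then 1 else 0) with hX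
  refine ⟨X, ?_, ?_⟩
  · -- invertibility
    set cE : Fin (n + m) ≃ (Fin m ⊕ Fin n) :=
      (finCongr (Nat.add_comm n m)).trans finSumFinEquiv.symm with hcE
    set rE : Fin (n + m) ≃ (Fin m ⊕ Fin n) :=
      { toFun := fun i =>
          if h : i ∈ I then Sum.inl ((I.orderIsoOfFin hI).symm ⟨i, h⟩)
          else Sum.inr ((Iᶜ.orderIsoOfFin hc).symm ⟨i, Finset.mem_compl.mpr h⟩)
        invFun := Sum.elim (fun a => (I.orderIsoOfFin hI a : Fin (n + m)))
          (fun b => (Iᶜ.orderIsoOfFin hc b : Fin (n + m)))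
        left_inv := fun i => by
          by_cases h : i ∈ I
          · simp only [dif_pos h, Sum.elim_inl, OrderIso.apply_symm_apply]
          · simp only [dif_neg h, Sum.elim_inr, OrderIso.apply_symm_apply]
        right_inv := fun p => by
          cases p with
          | inl a =>
            have hmem : ((I.orderIsoOfFin hI a : Fin (n + m))) ∈ I := (I.orderIsoOfFin hI a).2
            refine (dif_pos hmem).trans ?_
            congr 1
            show (I.orderIsoOfFin hI).symm (I.orderIsoOfFin hI a) = a
            exact OrderIso.symm_apply_apply _ _
          | inr b =>
            have hmem : ((Iᶜ.orderIsoOfFin hc b : Fin (n + m))) ∈ Iᶜ :=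
              (Iᶜ.orderIsoOfFin hc b).2
            have hnmem : ((Iᶜ.orderIsoOfFin hc b : Fin (n + m))) ∉ I :=
              Finset.mem_compl.mp hmem
            refine (dif_neg hnmem).trans ?_
            congr 1
            show (Iᶜ.orderIsoOfFin hc).symm (Iᶜ.orderIsoOfFin hc b) = b
            exact OrderIso.symm_apply_apply _ _ } with hrE
    set B : Matrix (Fin n) (Fin m) S :=
      Matrix.of (fun a b => K' ((Iᶜ.orderIsoOfFin hc a : Fin (n + m))) b) with hB
    set W : Matrix (Fin m ⊕ Fin n) (Fin m ⊕ Fin n) S :=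
      Matrix.fromBlocks 1 0 B 1 with hW
    have hQW : (Matrix.fromCols K' X).submatrix
        (fun i : Fin (n + m) => i)
        (fun j : Fin (n + m) => finSumFinEquiv.symm (finCongr (Nat.add_comm n m) j))
        = W.submatrix rE cE := by
      ext i j
      have key : ∀ q : Fin m ⊕ Fin n, Matrix.fromCols K' X i q = W (rE i) q := by
        intro q
        by_cases h : i ∈ I
        · have hrEi : rE i = Sum.inl ((I.orderIsoOfFin hI).symm ⟨i, h⟩) := by
            simp [hrE, h]
          have hiI : ((I.orderIsoOfFin hI ((I.orderIsoOfFin hI).symm ⟨i, h⟩) : Fin (n + m))) = i := by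
            rw [OrderIso.apply_symm_apply]
          cases q with
          | inl b =>
            rw [hrEi, Matrix.fromCols_apply_inl, hW, Matrix.fromBlocks_apply₁₁]
            have hh := hΔK' ((I.orderIsoOfFin hI).symm ⟨i, h⟩) b
            rw [hiI] at hh
            exact hh
          | inr b =>
            rw [hrEi, Matrix.fromCols_apply_inr, hW, Matrix.fromBlocks_apply₁₂,
              Matrix.zero_apply]
            have hne : i ≠ (Iᶜ.orderIsoOfFin hc b : Fin (n + m)) := by
              intro he
              exact (Finset.mem_compl.mp (Iᶜ.orderIsoOfFin hc b).2) (he ▸ h)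
            show (if i = ((Iᶜ.orderIsoOfFin hc b : Fin (n + m))) then (1 : S) else 0) = 0
            rw [if_neg hne]
        · have hrEi : rE i = Sum.inr ((Iᶜ.orderIsoOfFin hc).symm ⟨i, Finset.mem_compl.mpr h⟩) := by
            simp [hrE, h]
          have hiI : ((Iᶜ.orderIsoOfFin hc ((Iᶜ.orderIsoOfFin hc).symm
              ⟨i, Finset.mem_compl.mpr h⟩) : Fin (n + m))) = i := by
            rw [OrderIso.apply_symm_apply]
          cases q with
          | inl b =>
            rw [hrEi, Matrix.fromCols_apply_inl, hW, Matrix.fromBlocks_apply₂₁]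
            show K' i b = B ((Iᶜ.orderIsoOfFin hc).symm ⟨i, Finset.mem_compl.mpr h⟩) b
            rw [hB]
            show K' i b = K' ((Iᶜ.orderIsoOfFin hc ((Iᶜ.orderIsoOfFin hc).symm
              ⟨i, Finset.mem_compl.mpr h⟩) : Fin (n + m))) b
            rw [hiI]
          | inr b =>
            rw [hrEi, Matrix.fromCols_apply_inr, hW, Matrix.fromBlocks_apply₂₂]
            have hiff : i = (Iᶜ.orderIsoOfFin hc b : Fin (n + m)) ↔
                (Iᶜ.orderIsoOfFin hc).symm ⟨i, Finset.mem_compl.mpr h⟩ = b := by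
              constructor
              · intro he
                rw [show (⟨i, Finset.mem_compl.mpr h⟩ : {x // x ∈ Iᶜ}) = Iᶜ.orderIsoOfFin hc b from
                  Subtype.ext he, OrderIso.symm_apply_apply]
              · intro he
                rw [← hiI, he]
            show (if i = ((Iᶜ.orderIsoOfFin hc b : Fin (n + m))) then (1 : S) else 0)
              = (1 : Matrix (Fin n) (Fin n) S) ((Iᶜ.orderIsoOfFin hc).symm
                ⟨i, Finset.mem_compl.mpr h⟩) b
            rw [Matrix.one_apply, if_congr hiff rfl rfl]
      simp only [Matrix.submatrix_apply]
      exact key _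
    rw [hQW]
    have hWdet : IsUnit W.det := by
      rw [hW, Matrix.det_fromBlocks_zero₁₂]
      simp
    have hWinv : W⁻¹ * W = 1 := Matrix.nonsing_inv_mul W hWdet
    apply Matrix.isUnit_det_of_left_inverse (B := W⁻¹.submatrix cE rE)
    rw [Matrix.submatrix_mul_equiv W⁻¹ W cE rE cE, hWinv, Matrix.submatrix_one_equiv]
  · -- factorization
    show T.map φ = Matrix.fromCols K' X * Matrix.fromRows M 0
    rw [Matrix.fromCols_mul_fromRows]
    rw [Matrix.mul_zero, add_zero]
    exact hT'
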